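/- Let d ≥ 1 and a > 0. For a real number t and a > 0, define the truncation m_a(t) = t if |t| ≤ a, m_a(t) = a if t > a, and m_a(t) = −a if t < −a; apply m_a coordinatewise to vectors of ℝ^d. Let u be a random vector distributed according to the uniform (rotation-invariant) probability measure on the unit Euclidean sphere S^{d−1} ⊂ ℝ^d. Then E[ ‖u − m_a(u)‖₂² ] ≤ 4·e^{−d·a²/2}. -/

import Mathlib

open MeasureTheory

/-- Coordinatewise truncation of a real number to the interval `[-a, a]`. -/
noncomputable def truncCoord (a t : ℝ) : ℝ :=
  if |t| ≤ a then t else if t > a then a else -a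

/-- Coordinatewise truncation of a vector of `ℝ^d`. -/
noncomputable def truncVec (d : ℕ) (a : ℝ) (w : EuclideanSpace ℝ (Fin d)) :
    EuclideanSpace ℝ (Fin d) :=
  WithLp.toLp 2 (fun i => truncCoord a (w i))

open Real Finset
open scoped RealInnerProductSpace

set_option linter.unusedSectionVars false


section
variable {d : ℕ} (μ : Measure (EuclideanSpace ℝ (Fin d))) [IsProbabilityMeasure μ]

lemma cont_integrand (l : ℝ) (v : EuclideanSpace ℝ (Fin d)) :
    Continuous fun u : EuclideanSpace ℝ (Fin d) => rexp (l * ⟪u, v⟫) :=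
  (Real.continuous_exp).comp (continuous_const.mul (continuous_id.inner continuous_const))

lemma integrable_exp_inner (hsphere : ∀ᵐ w ∂μ, ‖w‖ = 1) (l : ℝ) (v : EuclideanSpace ℝ (Fin d))
    (hv : ‖v‖ = 1) :
    Integrable (fun u => rexp (l * ⟪u, v⟫)) μ := by
  refine Integrable.mono' (integrable_const (rexp |l|)) (cont_integrand l v).aestronglyMeasurable ?_
  filter_upwards [hsphere] with u hu
  rw [Real.norm_eq_abs, Real.abs_exp]
  apply Real.exp_le_exp.2
  calc l * ⟪u, v⟫ ≤ |l * ⟪u, v⟫| := le_abs_self _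
    _ = |l| * |⟪u, v⟫| := abs_mul _ _
    _ ≤ |l| * 1 := by
        refine mul_le_mul_of_nonneg_left ?_ (abs_nonneg l)
        simpa [hu, hv] using abs_real_inner_le_norm u v
    _ = |l| := mul_one _

lemma mgf_inner_eq (hrot : ∀ O : EuclideanSpace ℝ (Fin d) ≃ₗᵢ[ℝ] EuclideanSpace ℝ (Fin d),
      Measure.map O μ = μ) (l : ℝ) (v w : EuclideanSpace ℝ (Fin d))
    (hv : ‖v‖ = 1) (hw : ‖w‖ = 1) :
    ∫ u, rexp (l * ⟪u, v⟫) ∂μ = ∫ u, rexp (l * ⟪u, w⟫) ∂μ := by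
  set O : EuclideanSpace ℝ (Fin d) ≃ₗᵢ[ℝ] EuclideanSpace ℝ (Fin d) :=
    Submodule.reflection (Submodule.span ℝ {v - w})ᗮ with hO
  have hOv : O v = w := Submodule.reflection_sub (by rw [hv, hw])
  calc ∫ u, rexp (l * ⟪u, v⟫) ∂μ = ∫ u, rexp (l * ⟪u, v⟫) ∂(Measure.map O μ) := by rw [hrot O]
    _ = ∫ u, rexp (l * ⟪O u, v⟫) ∂μ := by
        rw [integral_map O.continuous.aemeasurable (cont_integrand l v).aestronglyMeasurable]
    _ = ∫ u, rexp (l * ⟪u, O.symm v⟫) ∂μ := by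
        congr 1; ext u
        rw [← O.inner_map_map u (O.symm v), O.apply_symm_apply]
    _ = ∫ u, rexp (l * ⟪u, w⟫) ∂μ := by
        have : O.symm v = w := by
          rw [show O.symm = O by rw [hO, Submodule.reflection_symm]]
          exact hOv
        rw [this]

end

section
set_option linter.unusedSectionVars false
variable {d : ℕ} (μ : Measure (EuclideanSpace ℝ (Fin d))) [IsProbabilityMeasure μ]

/-- sign vectors -/
noncomputable def sgnVec (d : ℕ) (t : Finset (Fin d)) : EuclideanSpace ℝ (Fin d) :=
  WithLp.toLp 2 (fun i => (if i ∈ t then (1:ℝ) else -1) / Real.sqrt d)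

lemma sgnVec_norm (hd : 1 ≤ d) (t : Finset (Fin d)) : ‖sgnVec d t‖ = 1 := by
  have hd0 : 0 < (d:ℝ) := by exact_mod_cast hd
  rw [EuclideanSpace.norm_eq]
  have : ∀ i : Fin d, ‖sgnVec d t i‖ ^ 2 = 1 / d := by
    intro i
    rw [Real.norm_eq_abs, sq_abs, sgnVec]
    rcases em (i ∈ t) with h | h <;>
      simp [h, div_pow, Real.sq_sqrt hd0.le, one_div]
  rw [Finset.sum_congr rfl fun i _ => this i]
  rw [Finset.sum_const, Finset.card_univ, Fintype.card_fin]
  rw [nsmul_eq_mul, mul_one_div, div_self hd0.ne']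
  exact Real.sqrt_one

lemma inner_sgnVec (t : Finset (Fin d)) (u : EuclideanSpace ℝ (Fin d)) :
    ⟪u, sgnVec d t⟫ = (∑ i ∈ t, u i / Real.sqrt d) + ∑ i ∈ Finset.univ \ t, -(u i / Real.sqrt d) := by
  rw [PiLp.inner_apply]
  simp only [RCLike.inner_apply, starRingEnd_apply, star_trivial]
  rw [← Finset.sum_add_sum_compl t fun i => sgnVec d t i * u i]
  rw [Finset.compl_eq_univ_sdiff]
  congr 1
  · exact Finset.sum_congr rfl fun i hi => by
      simp [sgnVec, hi, div_eq_mul_inv, mul_comm]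
  · refine Finset.sum_congr rfl fun i hi => ?_
    have : i ∉ t := (Finset.mem_sdiff.1 hi).2
    simp [sgnVec, this, div_eq_mul_inv, mul_comm]

end

section
set_option linter.unusedSectionVars false
variable {d : ℕ} (μ : Measure (EuclideanSpace ℝ (Fin d))) [IsProbabilityMeasure μ]

lemma sum_sq_eq_one (u : EuclideanSpace ℝ (Fin d)) (hu : ‖u‖ = 1) :
    ∑ i, u i ^ 2 = 1 := by
  have h := congrArg (· ^ 2) hu
  simp only [EuclideanSpace.norm_eq] at h
  rw [Real.sq_sqrt (by positivity)] at h
  simpa [Real.norm_eq_abs, sq_abs] using h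

lemma sum_exp_sgn (hd : 1 ≤ d) (l : ℝ) (u : EuclideanSpace ℝ (Fin d)) (hu : ‖u‖ = 1) :
    ∑ t ∈ (Finset.univ : Finset (Fin d)).powerset, rexp (l * ⟪u, sgnVec d t⟫)
      ≤ 2 ^ d * rexp (l ^ 2 / (2 * d)) := by
  have hd0 : 0 < (d:ℝ) := by exact_mod_cast hd
  set x : Fin d → ℝ := fun i => l * u i / Real.sqrt d with hx
  have key : ∀ t ∈ (Finset.univ : Finset (Fin d)).powerset,
      rexp (l * ⟪u, sgnVec d t⟫) = (∏ i ∈ t, rexp (x i)) * ∏ i ∈ Finset.univ \ t, rexp (-x i) := by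
    intro t _
    rw [inner_sgnVec, ← Real.exp_sum, ← Real.exp_sum, ← Real.exp_add]
    congr 1
    rw [mul_add, Finset.mul_sum, Finset.mul_sum]
    congr 1
    · exact Finset.sum_congr rfl fun i _ => by rw [hx]; ring
    · exact Finset.sum_congr rfl fun i _ => by rw [hx]; ring
  rw [Finset.sum_congr rfl key, ← Finset.prod_add]
  have step : ∀ i : Fin d, rexp (x i) + rexp (-x i) ≤ 2 * rexp (x i ^ 2 / 2) := by
    intro i
    have := Real.cosh_le_exp_half_sq (x i)
    rw [Real.cosh_eq] at this
    linarith
  calc ∏ i, (rexp (x i) + rexp (-x i)) ≤ ∏ i, 2 * rexp (x i ^ 2 / 2) :=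
        Finset.prod_le_prod (fun i _ => by positivity) (fun i _ => step i)
    _ = 2 ^ d * rexp (∑ i, x i ^ 2 / 2) := by
        rw [Finset.prod_mul_distrib, Finset.prod_const, Finset.card_univ, Fintype.card_fin,
          Real.exp_sum]
    _ = 2 ^ d * rexp (l ^ 2 / (2 * d)) := by
        congr 2
        have : ∀ i : Fin d, x i ^ 2 / 2 = l ^ 2 / (2 * d) * u i ^ 2 := by
          intro i
          rw [hx]
          rw [div_pow, mul_pow, Real.sq_sqrt hd0.le]
          ring
        rw [Finset.sum_congr rfl fun i _ => this i, ← Finset.mul_sum,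
          sum_sq_eq_one u hu, mul_one]

lemma mgf_le (hd : 1 ≤ d) (hsphere : ∀ᵐ w ∂μ, ‖w‖ = 1)
    (hrot : ∀ O : EuclideanSpace ℝ (Fin d) ≃ₗᵢ[ℝ] EuclideanSpace ℝ (Fin d),
      Measure.map O μ = μ)
    (l : ℝ) (v : EuclideanSpace ℝ (Fin d)) (hv : ‖v‖ = 1) :
    ∫ u, rexp (l * ⟪u, v⟫) ∂μ ≤ rexp (l ^ 2 / (2 * d)) := by
  have h2d : (0:ℝ) < 2 ^ d := by positivity
  have hI : (2:ℝ) ^ d * ∫ u, rexp (l * ⟪u, v⟫) ∂μ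
      = ∑ t ∈ (Finset.univ : Finset (Fin d)).powerset, ∫ u, rexp (l * ⟪u, sgnVec d t⟫) ∂μ := by
    rw [Finset.sum_congr rfl fun t _ =>
      (mgf_inner_eq μ hrot l (sgnVec d t) v (sgnVec_norm hd t) hv)]
    rw [Finset.sum_const, Finset.card_powerset, Finset.card_univ, Fintype.card_fin,
      nsmul_eq_mul]
    push_cast
    ring
  have hswap : ∑ t ∈ (Finset.univ : Finset (Fin d)).powerset, ∫ u, rexp (l * ⟪u, sgnVec d t⟫) ∂μ
      = ∫ u, ∑ t ∈ (Finset.univ : Finset (Fin d)).powerset, rexp (l * ⟪u, sgnVec d t⟫) ∂μ :=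
    (integral_finset_sum _ fun t _ =>
      integrable_exp_inner μ hsphere l (sgnVec d t) (sgnVec_norm hd t)).symm
  have hbound : ∫ u, ∑ t ∈ (Finset.univ : Finset (Fin d)).powerset,
        rexp (l * ⟪u, sgnVec d t⟫) ∂μ ≤ 2 ^ d * rexp (l ^ 2 / (2 * d)) := by
    have := integral_mono_ae
      (integrable_finset_sum _ fun t _ =>
        integrable_exp_inner μ hsphere l (sgnVec d t) (sgnVec_norm hd t))
      (integrable_const ((2:ℝ) ^ d * rexp (l ^ 2 / (2 * d))))
      (by filter_upwards [hsphere] with u hu using sum_exp_sgn hd l u hu)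
    simpa using this
  have : (2:ℝ) ^ d * ∫ u, rexp (l * ⟪u, v⟫) ∂μ ≤ 2 ^ d * rexp (l ^ 2 / (2 * d)) := by
    rw [hI, hswap]; exact hbound
  exact le_of_mul_le_mul_left this h2d

end

section
set_option linter.unusedSectionVars false
variable {d : ℕ} (μ : Measure (EuclideanSpace ℝ (Fin d))) [IsProbabilityMeasure μ]

lemma tail_le (hd : 1 ≤ d) (hsphere : ∀ᵐ w ∂μ, ‖w‖ = 1)
    (hrot : ∀ O : EuclideanSpace ℝ (Fin d) ≃ₗᵢ[ℝ] EuclideanSpace ℝ (Fin d),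
      Measure.map O μ = μ)
    (s : ℝ) (hs : 0 < s) (v : EuclideanSpace ℝ (Fin d)) (hv : ‖v‖ = 1) :
    (μ {u | s < ⟪u, v⟫}).toReal ≤ rexp (-(d:ℝ) * s ^ 2 / 2) := by
  have hd0 : 0 < (d:ℝ) := by exact_mod_cast hd
  set l : ℝ := d * s with hl
  have hl0 : 0 < l := by positivity
  have markov := mul_meas_ge_le_integral_of_nonneg
    (μ := μ) (f := fun u => rexp (l * ⟪u, v⟫))
    (Filter.Eventually.of_forall fun u => (Real.exp_pos _).le)
    (integrable_exp_inner μ hsphere l v hv) (rexp (l * s))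
  have hsub : {u : EuclideanSpace ℝ (Fin d) | s < ⟪u, v⟫}
      ⊆ {u | rexp (l * s) ≤ rexp (l * ⟪u, v⟫)} := by
    intro u hu
    exact Real.exp_le_exp.2 (mul_le_mul_of_nonneg_left (le_of_lt hu) hl0.le)
  have hmono : (μ {u | s < ⟪u, v⟫}).toReal
      ≤ (μ {u | rexp (l * s) ≤ rexp (l * ⟪u, v⟫)}).toReal :=
    ENNReal.toReal_mono (measure_ne_top μ _) (measure_mono hsub)
  have hmgf := mgf_le μ hd hsphere hrot l v hv
  have key : rexp (l * s) * (μ {u | s < ⟪u, v⟫}).toReal ≤ rexp (l ^ 2 / (2 * d)) :=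
    le_trans (mul_le_mul_of_nonneg_left hmono (Real.exp_pos _).le) (markov.trans hmgf)
  calc (μ {u | s < ⟪u, v⟫}).toReal ≤ rexp (l ^ 2 / (2 * d)) / rexp (l * s) := by
        rw [le_div_iff₀ (Real.exp_pos _)]
        linarith [key]
      _ = rexp (l ^ 2 / (2 * d) - l * s) := by rw [Real.exp_sub]
      _ = rexp (-(d:ℝ) * s ^ 2 / 2) := by
          congr 1
          rw [hl]
          field_simp
          ring

lemma sq_tail (hd : 1 ≤ d) (hsphere : ∀ᵐ w ∂μ, ‖w‖ = 1)
    (hrot : ∀ O : EuclideanSpace ℝ (Fin d) ≃ₗᵢ[ℝ] EuclideanSpace ℝ (Fin d),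
      Measure.map O μ = μ)
    (i : Fin d) (r : ℝ) (hr : 0 < r) :
    (μ {u | r < (u i) ^ 2}).toReal ≤ 2 * rexp (-(d:ℝ) * r / 2) := by
  set s : ℝ := Real.sqrt r with hs
  have hs0 : 0 < s := Real.sqrt_pos.2 hr
  have hss : s ^ 2 = r := Real.sq_sqrt hr.le
  set e : EuclideanSpace ℝ (Fin d) := EuclideanSpace.single i (1:ℝ) with he
  have hne : ‖e‖ = 1 := by simp [he, EuclideanSpace.norm_single]
  have hnne : ‖-e‖ = 1 := by rw [norm_neg]; exact hne
  have hie : ∀ u : EuclideanSpace ℝ (Fin d), ⟪u, e⟫ = u i := by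
    intro u; simp [he, EuclideanSpace.inner_single_right]
  have hsub : {u : EuclideanSpace ℝ (Fin d) | r < (u i) ^ 2}
      ⊆ {u | s < ⟪u, e⟫} ∪ {u | s < ⟪u, -e⟫} := by
    intro u hu
    have h1 : s < |u i| := by
      have h2 := Real.sqrt_lt_sqrt hr.le hu
      rwa [Real.sqrt_sq_eq_abs] at h2
    rcases lt_abs.mp h1 with h | h
    · left; show s < ⟪u, e⟫; rw [hie u]; exact h
    · right; show s < ⟪u, -e⟫; rw [inner_neg_right, hie u]; exact h
  have hA := tail_le μ hd hsphere hrot s hs0 e hne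
  have hB := tail_le μ hd hsphere hrot s hs0 (-e) hnne
  have hmeas : (μ {u | r < (u i) ^ 2}).toReal
      ≤ (μ {u | s < ⟪u, e⟫}).toReal + (μ {u | s < ⟪u, -e⟫}).toReal := by
    have h3 : μ {u | r < (u i) ^ 2} ≤ μ {u | s < ⟪u, e⟫} + μ {u | s < ⟪u, -e⟫} :=
      (measure_mono hsub).trans (measure_union_le _ _)
    have h4 := ENNReal.toReal_mono (by
      exact ENNReal.add_ne_top.2 ⟨measure_ne_top μ _, measure_ne_top μ _⟩) h3
    rwa [ENNReal.toReal_add (measure_ne_top μ _) (measure_ne_top μ _)] at h4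
  calc (μ {u | r < (u i) ^ 2}).toReal
      ≤ (μ {u | s < ⟪u, e⟫}).toReal + (μ {u | s < ⟪u, -e⟫}).toReal := hmeas
    _ ≤ rexp (-(d:ℝ) * s ^ 2 / 2) + rexp (-(d:ℝ) * s ^ 2 / 2) := add_le_add hA hB
    _ = 2 * rexp (-(d:ℝ) * r / 2) := by rw [hss]; ring


lemma trunc_pt {a : ℝ} (ha : 0 < a) (t : ℝ) :
    (t - truncCoord a t) ^ 2 ≤ max (t ^ 2 - a ^ 2) 0 := by
  unfold truncCoord
  split_ifs with h1 h2
  · simp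
  · refine le_max_of_le_left ?_
    have h3 : a < t := h2
    nlinarith
  · have h3 : a < |t| := not_le.mp h1
    have h4 : t < -a := by
      rcases lt_abs.mp h3 with h | h
      · exact absurd h h2
      · linarith
    refine le_max_of_le_left ?_
    nlinarith

lemma trunc_pt2 {a t : ℝ} : max (t ^ 2 - a ^ 2) 0 ≤ t ^ 2 :=
  max_le (by nlinarith [sq_nonneg a]) (sq_nonneg t)

lemma meas_trunc (a : ℝ) : Measurable (truncCoord a) := by
  unfold truncCoord
  exact Measurable.ite (measurableSet_le measurable_abs measurable_const) measurable_id
    (Measurable.ite (measurableSet_lt measurable_const measurable_id)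
      measurable_const measurable_const)

lemma norm_res (a : ℝ) (u : EuclideanSpace ℝ (Fin d)) :
    ‖u - truncVec d a u‖ ^ 2 = ∑ i, (u i - truncCoord a (u i)) ^ 2 := by
  rw [EuclideanSpace.norm_eq,
    Real.sq_sqrt (Finset.sum_nonneg fun i _ => by positivity)]
  refine Finset.sum_congr rfl fun i _ => ?_
  rw [Real.norm_eq_abs, sq_abs]
  rw [PiLp.sub_apply]; rfl

/-- The expected squared ℓ₂-norm of the residual after truncating a uniformly random
unit vector is at most `4 exp(-d a²/2)`. The uniform distribution on the unit sphere
is characterized as a rotation-invariant probability measure supported on the sphere. -/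
theorem stmt_3 (d : ℕ) (hd : 1 ≤ d) (a : ℝ) (ha : 0 < a)
    (μ : Measure (EuclideanSpace ℝ (Fin d))) [IsProbabilityMeasure μ]
    (hsphere : ∀ᵐ w ∂μ, ‖w‖ = 1)
    (hrot : ∀ O : EuclideanSpace ℝ (Fin d) ≃ₗᵢ[ℝ] EuclideanSpace ℝ (Fin d),
      Measure.map O μ = μ) :
    ∫ w, ‖w - truncVec d a w‖ ^ 2 ∂μ ≤ 4 * Real.exp (-(d : ℝ) * a ^ 2 / 2) := by
  have hd0 : 0 < (d:ℝ) := by exact_mod_cast hd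
  set F : Fin d → EuclideanSpace ℝ (Fin d) → ℝ :=
    fun i u => max ((u i) ^ 2 - a ^ 2) 0 with hF
  have measF : ∀ i, Measurable (F i) := fun i =>
    ((((measurable_pi_apply i).comp (WithLp.measurable_ofLp 2 _)).pow_const 2).sub measurable_const).max measurable_const
  have intF : ∀ i, Integrable (F i) μ := by
    intro i
    refine Integrable.mono' (integrable_const 1) (measF i).aestronglyMeasurable ?_
    filter_upwards [hsphere] with u hu
    rw [Real.norm_eq_abs, abs_of_nonneg (le_max_right _ _)]
    calc F i u ≤ (u i) ^ 2 := trunc_pt2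
      _ ≤ ∑ j, u j ^ 2 := Finset.single_le_sum (f := fun j => u j ^ 2) (fun j _ => sq_nonneg _) (Finset.mem_univ i)
      _ = 1 := sum_sq_eq_one u hu
  have measf : Measurable fun u : EuclideanSpace ℝ (Fin d) => ‖u - truncVec d a u‖ ^ 2 := by
    have : (fun u : EuclideanSpace ℝ (Fin d) => ‖u - truncVec d a u‖ ^ 2)
        = fun u => ∑ i, (u i - truncCoord a (u i)) ^ 2 := funext fun u => norm_res a u
    rw [this]
    exact Finset.measurable_sum _ fun i _ =>
      (((measurable_pi_apply i).comp (WithLp.measurable_ofLp 2 _)).sub ((meas_trunc a).comp ((measurable_pi_apply i).comp (WithLp.measurable_ofLp 2 _)))).pow_const 2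
  have intf : Integrable (fun u : EuclideanSpace ℝ (Fin d) => ‖u - truncVec d a u‖ ^ 2) μ := by
    refine Integrable.mono' (integrable_const 1) measf.aestronglyMeasurable ?_
    filter_upwards [hsphere] with u hu
    rw [Real.norm_eq_abs, abs_of_nonneg (by positivity)]
    rw [norm_res a u]
    calc ∑ i, (u i - truncCoord a (u i)) ^ 2 ≤ ∑ i, u i ^ 2 :=
          Finset.sum_le_sum fun i _ => (trunc_pt ha _).trans trunc_pt2
      _ = 1 := sum_sq_eq_one u hu
  have step1 : ∫ u, ‖u - truncVec d a u‖ ^ 2 ∂μ ≤ ∑ i, ∫ u, F i u ∂μ := by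
    rw [← integral_finset_sum _ fun i _ => intF i]
    refine integral_mono_ae intf (integrable_finset_sum _ fun i _ => intF i) ?_
    refine Filter.Eventually.of_forall fun u => ?_
    show ‖u - truncVec d a u‖ ^ 2 ≤ ∑ i, F i u
    rw [norm_res a u]
    exact Finset.sum_le_sum fun i _ => trunc_pt ha (u i)
  have step2 : ∀ i : Fin d, ∫ u, F i u ∂μ ≤ (4 / d) * rexp (-(d:ℝ) * a ^ 2 / 2) := by
    intro i
    rw [(intF i).integral_eq_integral_meas_lt
      (Filter.Eventually.of_forall fun u => le_max_right _ _)]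
    have hptbound : ∀ t ∈ Set.Ioi (0:ℝ),
        (μ {u | t < F i u}).toReal ≤ 2 * rexp (-(d:ℝ) * (a ^ 2 + t) / 2) := by
      intro t ht
      have hset : {u : EuclideanSpace ℝ (Fin d) | t < F i u}
          = {u | a ^ 2 + t < (u i) ^ 2} := by
        ext u
        simp only [hF, Set.mem_setOf_eq, lt_max_iff]
        constructor
        · rintro (h | h)
          · linarith
          · exact absurd h (not_lt.2 (le_of_lt ht))
        · intro h; left; linarith
      rw [hset]
      exact sq_tail μ hd hsphere hrot i (a ^ 2 + t) (add_pos_of_nonneg_of_pos (sq_nonneg a) (Set.mem_Ioi.mp ht))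
    have hg : (fun t : ℝ => 2 * rexp (-(d:ℝ) * (a ^ 2 + t) / 2))
        = fun t : ℝ => (2 * rexp (-(d:ℝ) * a ^ 2 / 2)) * rexp (-((d:ℝ)/2) * t) := by
      funext t
      rw [mul_assoc, ← Real.exp_add]
      congr 1
      ring
    have hgint : IntegrableOn (fun t : ℝ => 2 * rexp (-(d:ℝ) * (a ^ 2 + t) / 2))
        (Set.Ioi (0:ℝ)) := by
      rw [hg]
      exact (exp_neg_integrableOn_Ioi 0 (by positivity : (0:ℝ) < (d:ℝ)/2)).const_mul _
    have hmono : ∫ t in Set.Ioi (0:ℝ), (μ {u | t < F i u}).toReal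
        ≤ ∫ t in Set.Ioi (0:ℝ), 2 * rexp (-(d:ℝ) * (a ^ 2 + t) / 2) := by
      refine integral_mono_of_nonneg
        (Filter.Eventually.of_forall fun t => ENNReal.toReal_nonneg) hgint ?_
      exact (ae_restrict_iff' measurableSet_Ioi).2 (Filter.Eventually.of_forall hptbound)
    have hval : ∫ t in Set.Ioi (0:ℝ), 2 * rexp (-(d:ℝ) * (a ^ 2 + t) / 2)
        = (4 / d) * rexp (-(d:ℝ) * a ^ 2 / 2) := by
      rw [hg, integral_const_mul]
      have hcomp := integral_comp_mul_left_Ioi (fun y => rexp (-y)) 0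
        (by positivity : (0:ℝ) < (d:ℝ)/2)
      simp only [mul_zero, smul_eq_mul, integral_exp_neg_Ioi_zero, mul_one] at hcomp
      have : (fun t : ℝ => rexp (-((d:ℝ)/2) * t)) = fun t : ℝ => rexp (-((d:ℝ)/2 * t)) := by
        funext t; rw [neg_mul]
      rw [this, hcomp]
      rw [inv_div]
      ring
    exact hmono.trans (le_of_eq hval)
  calc ∫ u, ‖u - truncVec d a u‖ ^ 2 ∂μ ≤ ∑ i, ∫ u, F i u ∂μ := step1
    _ ≤ ∑ _i : Fin d, (4 / d) * rexp (-(d:ℝ) * a ^ 2 / 2) :=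
        Finset.sum_le_sum fun i _ => step2 i
    _ = 4 * rexp (-(d:ℝ) * a ^ 2 / 2) := by
        rw [Finset.sum_const, Finset.card_univ, Fintype.card_fin, nsmul_eq_mul]
        field_simp

end
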